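/- The map f · ⟨α, g⟩ = ⟨|f| + α − 2min{α, c(f⁻¹,g)}, f⟩ if α ≤ c(f⁻¹,g), and f · ⟨α, g⟩ = ⟨|f| + α − 2c(f⁻¹,g), f * g⟩ if α > c(f⁻¹,g), is well-defined on Γ_G: if (α,g) ∼ (α₁,g₁) then f·⟨α,g⟩ = f·⟨α₁,g₁⟩. -/

import Mathlib

/-- The map `f · ⟨α, g⟩ = ⟨|f| + α − 2min{α, c(f⁻¹,g)}, f⟩` if
`α ≤ c(f⁻¹,g)`, and `f · ⟨α, g⟩ = ⟨|f| + α − 2c(f⁻¹,g), f * g⟩` if `α > c(f⁻¹,g)`,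
is well-defined on `Γ_G`: if `(α,g) ∼ (α₁,g₁)` then `f·⟨α,g⟩ = f·⟨α₁,g₁⟩`
(i.e. the resulting pairs are again `∼`-equivalent).

Here `G ≤ CDR(Λ,X)` is abstracted (via Chiswell's theorem) as a group with a free
Lyndon length function `l : G → Λ` into a discretely ordered abelian group `Λ`,
with Gromov product `c` and with the reduced product `f * g` of infinite words
realized by the group multiplication. -/
theorem universal_tree_action_well_defined {Λ : Type*} [AddCommGroup Λ] [LinearOrder Λ]
    [IsOrderedAddMonoid Λ]
    [One Λ] (hone : (0 : Λ) < 1) (hdisc : ∀ e : Λ, 0 < e → (1 : Λ) ≤ e)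
    {G : Type*} [Group G] (l : G → Λ) (c : G → G → Λ)
    (hc : ∀ x y, 2 • c x y = l x + l y - l (x⁻¹ * y))
    (hL1 : ∀ x, 0 ≤ l x) (hL1' : l 1 = 0)
    (hL2 : ∀ x, l x⁻¹ = l x)
    (hL3 : ∀ x y z, c x z < c x y → c x z = c y z)
    (hfree : ∀ g : G, g ≠ 1 → l g < l (g * g))
    (act : G → Λ × G → Λ × G)
    (hact : ∀ (f : G) (p : Λ × G), act f p =
      if p.1 ≤ c f⁻¹ p.2 then (l f + p.1 - 2 • min p.1 (c f⁻¹ p.2), f)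
      else (l f + p.1 - 2 • c f⁻¹ p.2, f * p.2)) :
    ∀ (f g g₁ : G) (α α₁ : Λ),
      0 ≤ α → α ≤ l g → 0 ≤ α₁ → α₁ ≤ l g₁ →
      α = α₁ → α ≤ c g g₁ →
      (act f (α, g)).1 = (act f (α₁, g₁)).1 ∧
        (act f (α, g)).1 ≤ c (act f (α, g)).2 (act f (α₁, g₁)).2 := by

  intro f g g₁ α α₁ hα0 hαg hα₁0 hα₁g hαeq hαc
  subst hαeq
  have two_inj : ∀ x y : Λ, x + x = y + y → x = y := by
    intro x y h
    rcases lt_trichotomy x y with h' | h' | h'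
    · exact absurd h (ne_of_lt (add_lt_add h' h'))
    · exact h'
    · exact absurd h (ne_of_gt (add_lt_add h' h'))
  have two_le : ∀ x y : Λ, x + x ≤ y + y → x ≤ y := by
    intro x y h
    by_contra h'
    push_neg at h'
    exact absurd h (not_le.2 (add_lt_add h' h'))
  have hc' : ∀ x y, c x y + c x y = l x + l y - l (x⁻¹ * y) := by
    intro x y; rw [← two_nsmul]; exact hc x y
  have csymm : ∀ x y, c x y = c y x := by
    intro x y
    apply two_inj
    rw [hc' x y, hc' y x]
    have h : l (y⁻¹ * x) = l (x⁻¹ * y) := by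
      rw [← hL2 (y⁻¹ * x)]; congr 1; group
    rw [h]; abel
  have hcff : c f f = l f := by
    apply two_inj
    rw [hc' f f, inv_mul_cancel, hL1', sub_zero]
  have eq12 : ¬ α ≤ c f⁻¹ g → c f⁻¹ g = c f⁻¹ g₁ := by
    intro h
    have h' : c g f⁻¹ < c g g₁ := lt_of_lt_of_le ((csymm f⁻¹ g) ▸ not_le.1 h) hαc
    calc c f⁻¹ g = c g f⁻¹ := csymm _ _
      _ = c g₁ f⁻¹ := hL3 g g₁ f⁻¹ h'
      _ = c f⁻¹ g₁ := csymm _ _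
  have eq21 : ¬ α ≤ c f⁻¹ g₁ → c f⁻¹ g₁ = c f⁻¹ g := by
    intro h
    have h' : c g₁ f⁻¹ < c g₁ g := by
      rw [csymm g₁ g]
      exact lt_of_lt_of_le ((csymm f⁻¹ g₁) ▸ not_le.1 h) hαc
    calc c f⁻¹ g₁ = c g₁ f⁻¹ := csymm _ _
      _ = c g f⁻¹ := hL3 g₁ g f⁻¹ h'
      _ = c f⁻¹ g := csymm _ _
  rw [hact f (α, g), hact f (α, g₁)]
  by_cases h1 : α ≤ c f⁻¹ g <;> by_cases h2 : α ≤ c f⁻¹ g₁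
  · simp only [if_pos h1, if_pos h2, min_eq_left h1, min_eq_left h2]
    refine ⟨trivial, ?_⟩
    rw [hcff, two_nsmul]
    have h : l f + α - (α + α) = l f - α := by abel
    rw [h]
    exact sub_le_self _ hα0
  · exact absurd (by rw [eq21 h2]; exact h1) h2
  · exact absurd (by rw [eq12 h1]; exact h2) h1
  · have hab := eq12 h1
    simp only [if_neg h1, if_neg h2]
    constructor
    · rw [hab]
    · apply two_le
      rw [hc' (f * g) (f * g₁)]
      have e1 : l (f * g) = l f + l g - (c f⁻¹ g + c f⁻¹ g) := by
        have h := hc' f⁻¹ g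
        rw [hL2, inv_inv] at h
        rw [h]; abel
      have e2 : l (f * g₁) = l f + l g₁ - (c f⁻¹ g₁ + c f⁻¹ g₁) := by
        have h := hc' f⁻¹ g₁
        rw [hL2, inv_inv] at h
        rw [h]; abel
      have e3 : l (g⁻¹ * g₁) = l g + l g₁ - (c g g₁ + c g g₁) := by
        have h := hc' g g₁
        rw [h]; abel
      have e4 : (f * g)⁻¹ * (f * g₁) = g⁻¹ * g₁ := by group
      rw [e1, e2, e4, e3, two_nsmul, ← hab]
      have h5 : (l f + l g - (c f⁻¹ g + c f⁻¹ g)) + (l f + l g₁ - (c f⁻¹ g + c f⁻¹ g))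
          - (l g + l g₁ - (c g g₁ + c g g₁))
          = (l f + α - (c f⁻¹ g + c f⁻¹ g)) + (l f + α - (c f⁻¹ g + c f⁻¹ g))
            + ((c g g₁ - α) + (c g g₁ - α)) := by abel
      rw [h5]
      exact le_add_of_nonneg_right
        (add_nonneg (sub_nonneg.2 hαc) (sub_nonneg.2 hαc))
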